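/- Let M be the Gram matrix of permutation operators, M_{π,σ} = D^{l(π^{-1}σ)} where l counts cycles, indexed by permutations π, σ ∈ S_n with n fixed. Then the diagonal entries equal D^n, all off-diagonal entries are at most D^{n-1}, and for D sufficiently large M is invertible with M^{-1} = D^{-n}·I + E where every entry of E has magnitude O(D^{-n-1}). -/

import Mathlib

open Finset
open scoped NNReal

/-- The number of cycles (including fixed points) of a permutation of `n` elements. -/
def numCycles {n : ℕ} (σ : Equiv.Perm (Fin n)) : ℕ :=
  Multiset.card σ.cycleType + (n - σ.cycleType.sum)

attribute [local instance] Matrix.linftyOpNormedAddCommGroup Matrix.linftyOpNormedRing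
  Matrix.linftyOpNormedSpace

@[local instance]
def matrixCompleteAux {ι : Type*} [Fintype ι] [DecidableEq ι] :
    CompleteSpace (Matrix ι ι ℝ) :=
  FiniteDimensional.complete ℝ _

lemma entry_abs_le_norm_aux {ι : Type*} [Fintype ι] [DecidableEq ι]
    (A : Matrix ι ι ℝ) (i j : ι) : |A i j| ≤ ‖A‖ := by
  have h : ‖A i j‖₊ ≤ ‖A‖₊ := by
    rw [Matrix.linfty_opNNNorm_def]
    exact le_trans
      (Finset.single_le_sum (f := fun j => ‖A i j‖₊) (fun _ _ => zero_le) (Finset.mem_univ j))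
      (Finset.le_sup (f := fun i => ∑ j, ‖A i j‖₊) (Finset.mem_univ i))
  rw [← Real.norm_eq_abs, ← coe_nnnorm, ← coe_nnnorm A]
  exact_mod_cast h

lemma norm_le_of_entry_aux {ι : Type*} [Fintype ι] [DecidableEq ι]
    (A : Matrix ι ι ℝ) (c : ℝ) (hc : 0 ≤ c) (h : ∀ i j, |A i j| ≤ c) :
    ‖A‖ ≤ Fintype.card ι * c := by
  have key : ‖A‖₊ ≤ (Fintype.card ι : ℝ≥0) * c.toNNReal := by
    rw [Matrix.linfty_opNNNorm_def]
    apply Finset.sup_le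
    intro i _
    calc ∑ j, ‖A i j‖₊ ≤ ∑ _j : ι, c.toNNReal := by
          refine Finset.sum_le_sum fun j _ => ?_
          rw [← NNReal.coe_le_coe, coe_nnnorm, Real.coe_toNNReal _ hc, Real.norm_eq_abs]
          exact h i j
      _ = (Fintype.card ι : ℝ≥0) * c.toNNReal := by
          simp [Finset.sum_const, nsmul_eq_mul]
  have := (NNReal.coe_le_coe).mpr key
  simpa [Real.coe_toNNReal _ hc] using this

lemma numCycles_one_aux (n : ℕ) : numCycles (1 : Equiv.Perm (Fin n)) = n := by
  simp [numCycles, Equiv.Perm.cycleType_one]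

lemma numCycles_lt_aux {n : ℕ} {σ : Equiv.Perm (Fin n)} (h : σ ≠ 1) :
    numCycles σ + 1 ≤ n := by
  have h1 : σ.cycleType.sum ≤ n := by
    rw [Equiv.Perm.sum_cycleType]
    simpa using Finset.card_le_card (Finset.subset_univ σ.support)
  have h2 : Multiset.card σ.cycleType • 2 ≤ σ.cycleType.sum :=
    Multiset.card_nsmul_le_sum fun _ hx => Equiv.Perm.two_le_of_mem_cycleType hx
  have h3 : 1 ≤ Multiset.card σ.cycleType := by
    rcases Nat.eq_zero_or_pos (Multiset.card σ.cycleType) with h0 | h0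
    · exact absurd (Equiv.Perm.card_cycleType_eq_zero.mp h0) h
    · exact h0
  rw [smul_eq_mul] at h2
  unfold numCycles
  omega

/-- The Gram matrix `M_{π,σ} = D^{l(π⁻¹σ)}` of the permutation operators on
`(ℂ^D)^{⊗n}` has diagonal entries `D^n`, off-diagonal entries at most `D^{n-1}`,
and for `D` large enough it is invertible with `M⁻¹ = D^{-n}·I + E`, where every
entry of `E` has magnitude `O(D^{-n-1})`. -/
theorem stmt_12 (n : ℕ) (hn : 1 ≤ n) :
    ∃ C : ℝ, 0 < C ∧ ∃ D₀ : ℕ, ∀ D : ℕ, D₀ ≤ D →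
      ∀ M : Matrix (Equiv.Perm (Fin n)) (Equiv.Perm (Fin n)) ℝ,
        (M = fun π σ => (D : ℝ) ^ (numCycles (π⁻¹ * σ))) →
        (∀ π, M π π = (D : ℝ) ^ n) ∧
        (∀ π σ, π ≠ σ → M π σ ≤ (D : ℝ) ^ (n - 1)) ∧
        IsUnit M ∧
        (∀ π σ, |M⁻¹ π σ - (if π = σ then ((D : ℝ) ^ n)⁻¹ else 0)|
            ≤ C / (D : ℝ) ^ (n + 1)) := by
  classical
  set G := Equiv.Perm (Fin n) with hG
  set k : ℕ := Fintype.card G with hk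
  have hkpos : 0 < k := Fintype.card_pos
  refine ⟨2 * k, by positivity, 2 * k + 1, ?_⟩
  intro D hD M hM
  have hD1 : 1 ≤ D := by omega
  have hDR : (1 : ℝ) ≤ (D : ℝ) := by exact_mod_cast hD1
  have hD0 : (0 : ℝ) < (D : ℝ) := lt_of_lt_of_le zero_lt_one hDR
  have hpow0 : (0 : ℝ) < (D : ℝ) ^ n := by positivity
  have hpowne : ((D : ℝ) ^ n) ≠ 0 := ne_of_gt hpow0
  -- diagonal
  have hdiag : ∀ π : G, M π π = (D : ℝ) ^ n := by
    intro π
    rw [hM]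
    simp [numCycles_one_aux]
  -- off-diagonal
  have hoff : ∀ π σ : G, π ≠ σ → M π σ ≤ (D : ℝ) ^ (n - 1) := by
    intro π σ hne
    rw [hM]
    have hne1 : π⁻¹ * σ ≠ 1 := fun h => hne (by
      have := inv_mul_eq_one.mp h; exact this)
    have hle : numCycles (π⁻¹ * σ) ≤ n - 1 := by
      have := numCycles_lt_aux hne1; omega
    exact pow_le_pow_right₀ hDR hle
  -- the perturbation matrix
  set c : ℝ := ((D : ℝ) ^ n)⁻¹ with hc
  set N : Matrix G G ℝ := c • M - 1 with hN
  have hone_plus : (1 : Matrix G G ℝ) + N = c • M := by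
    rw [hN]; abel
  have hMN : M = ((D : ℝ) ^ n) • ((1 : Matrix G G ℝ) + N) := by
    rw [hone_plus, smul_smul, hc, mul_inv_cancel₀ hpowne, one_smul]
  -- entrywise bound for N
  have hNe : ∀ π σ : G, |N π σ| ≤ (D : ℝ)⁻¹ := by
    intro π σ
    by_cases h : π = σ
    · subst h
      have : N π π = 0 := by
        rw [hN]
        simp [Matrix.sub_apply, Matrix.smul_apply, Matrix.one_apply_eq, hdiag π, hc,
          smul_eq_mul, inv_mul_cancel₀ hpowne]
      rw [this, abs_zero]; positivity
    · have hN1 : N π σ = c * M π σ := by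
        rw [hN]
        simp [Matrix.sub_apply, Matrix.smul_apply, Matrix.one_apply_ne h, smul_eq_mul]
      have hMv : M π σ = (D : ℝ) ^ (numCycles (π⁻¹ * σ)) := by rw [hM]
      have hne1 : π⁻¹ * σ ≠ 1 := fun hh => h (inv_mul_eq_one.mp hh)
      have hlt : numCycles (π⁻¹ * σ) + 1 ≤ n := numCycles_lt_aux hne1
      have hkey : (D : ℝ) ^ (numCycles (π⁻¹ * σ)) * (D : ℝ) ≤ (D : ℝ) ^ n := by
        rw [← pow_succ]
        exact pow_le_pow_right₀ hDR hlt
      rw [hN1, hMv, abs_of_nonneg (by positivity)]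
      have h5 : (D : ℝ) ^ numCycles (π⁻¹ * σ) ≤ (D : ℝ) ^ n / (D : ℝ) :=
        (le_div_iff₀ hD0).mpr hkey
      calc c * (D : ℝ) ^ numCycles (π⁻¹ * σ)
          ≤ c * ((D : ℝ) ^ n / (D : ℝ)) := by
            refine mul_le_mul_of_nonneg_left h5 ?_
            rw [hc]; positivity
        _ = (D : ℝ)⁻¹ := by rw [hc]; field_simp
  -- norm bound for N
  have hNnorm : ‖N‖ ≤ (k : ℝ) * (D : ℝ)⁻¹ := by
    have := norm_le_of_entry_aux N ((D : ℝ)⁻¹) (by positivity) hNe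
    simpa [hk] using this
  have hDk : (2 * (k : ℝ) + 1) ≤ (D : ℝ) := by exact_mod_cast hD
  have hNhalf : ‖N‖ ≤ 1 / 2 := by
    refine hNnorm.trans ?_
    rw [← div_eq_mul_inv, div_le_iff₀ hD0]
    nlinarith [hkpos]
  have hNlt : ‖N‖ < 1 := lt_of_le_of_lt hNhalf (by norm_num)
  -- the unit 1 + N
  set u : (Matrix G G ℝ)ˣ := Units.oneSub (-N) (by rwa [norm_neg]) with hu_def
  have hu : (u : Matrix G G ℝ) = 1 + N := by
    rw [hu_def, Units.val_oneSub, sub_neg_eq_add]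
  set W : Matrix G G ℝ := c • (↑u⁻¹ : Matrix G G ℝ) with hW
  have hMu : M = ((D : ℝ) ^ n) • (u : Matrix G G ℝ) := by rw [hMN, hu]
  have hMW : M * W = 1 := by
    rw [hMu, hW, smul_mul_smul_comm, hc, mul_inv_cancel₀ hpowne, Units.mul_inv, one_smul]
  have hWM : W * M = 1 := by
    rw [hMu, hW, smul_mul_smul_comm, hc, inv_mul_cancel₀ hpowne, Units.inv_mul, one_smul]
  have hUnit : IsUnit M := ⟨⟨M, W, hMW, hWM⟩, rfl⟩
  have hinv : M⁻¹ = W := Matrix.inv_eq_right_inv hMW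
  -- bound ‖u⁻¹ - 1‖
  have hid : (↑u⁻¹ : Matrix G G ℝ) - 1 = (↑u⁻¹ : Matrix G G ℝ) * (-N) := by
    have h1 : (↑u⁻¹ : Matrix G G ℝ) * (1 - ↑u) = ↑u⁻¹ - 1 := by
      rw [mul_sub, mul_one, Units.inv_mul]
    have h2 : (1 : Matrix G G ℝ) - ↑u = -N := by rw [hu]; abel
    rw [← h1, h2]
  have hnorm1 : ‖(↑u⁻¹ : Matrix G G ℝ) - 1‖ ≤ ‖(↑u⁻¹ : Matrix G G ℝ)‖ * ‖N‖ := by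
    rw [hid]
    exact (norm_mul_le _ _).trans (by rw [norm_neg])
  have hone : ‖(1 : Matrix G G ℝ)‖ = 1 := by
    rw [← Matrix.diagonal_one, Matrix.linfty_opNorm_diagonal]
    exact norm_one
  have hinvnorm : ‖(↑u⁻¹ : Matrix G G ℝ)‖ ≤ 2 := by
    have h1 : ‖(↑u⁻¹ : Matrix G G ℝ)‖ - 1 ≤ ‖(↑u⁻¹ : Matrix G G ℝ) - 1‖ := by
      calc ‖(↑u⁻¹ : Matrix G G ℝ)‖ - 1 = ‖(↑u⁻¹ : Matrix G G ℝ)‖ - ‖(1 : Matrix G G ℝ)‖ := by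
            rw [hone]
        _ ≤ ‖(↑u⁻¹ : Matrix G G ℝ) - 1‖ := norm_sub_norm_le _ _
    have h2 := hnorm1
    have h3 := norm_nonneg (↑u⁻¹ : Matrix G G ℝ)
    nlinarith [hNhalf, norm_nonneg N]
  have hEnorm : ‖(↑u⁻¹ : Matrix G G ℝ) - 1‖ ≤ 2 * ((k : ℝ) * (D : ℝ)⁻¹) := by
    refine hnorm1.trans ?_
    have := mul_le_mul hinvnorm hNnorm (norm_nonneg N) (by norm_num)
    linarith
  refine ⟨hdiag, hoff, hUnit, ?_⟩
  intro π σ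
  have hrewrite : M⁻¹ π σ - (if π = σ then ((D : ℝ) ^ n)⁻¹ else 0)
      = c * (((↑u⁻¹ : Matrix G G ℝ) - 1) π σ) := by
    rw [hinv, hW]
    simp only [Matrix.smul_apply, Matrix.sub_apply, Matrix.one_apply, smul_eq_mul, mul_sub]
    split <;> simp [hc]
  rw [hrewrite, abs_mul, abs_of_nonneg (by rw [hc]; positivity)]
  have hentry : |((↑u⁻¹ : Matrix G G ℝ) - 1) π σ| ≤ 2 * ((k : ℝ) * (D : ℝ)⁻¹) :=
    (entry_abs_le_norm_aux _ π σ).trans hEnorm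
  calc c * |((↑u⁻¹ : Matrix G G ℝ) - 1) π σ|
      ≤ c * (2 * ((k : ℝ) * (D : ℝ)⁻¹)) := by
        refine mul_le_mul_of_nonneg_left hentry ?_
        rw [hc]; positivity
    _ = 2 * (k : ℝ) / (D : ℝ) ^ (n + 1) := by
        rw [hc, pow_succ]
        field_simp
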